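/- Let g be an element of Thompson's group V with N(g) ≥ 4 such that the single letter 0 is the range code of some branch of g, and let g1 = g·x0^2·x1^{−1}·x0^{−1}. Then the word 0 is not the range code of any branch of g1 (in fact 0 is a strict prefix of the range code of some branch of g1); N(g1) ≤ N(g) + 2; and N(g·w') ≥ N(g) for every prefix w' of the word x0·x0·x1^{−1}·x0^{−1} (i.e., for each of the elements g·x0, g·x0^2, g·x0^2·x1^{−1}, g·x0^2·x1^{−1}·x0^{−1}). -/

import Mathlib

/-!
Formalization framework for Thompson's groups `F ≤ T ≤ V` acting on the
Cantor set `{0,1}^ℕ`.  Elements of `V` are permutations of the Cantor set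
admitting a finite table of branches `u → v` (complete prefix codes) with
`g(uω) = vω`.  Products in the paper are composed left-to-right, i.e. the
paper's `g·h` is `Equiv.trans g h` (equivalently `h * g` in `Equiv.Perm`).
-/

abbrev CSeq : Type := ℕ → Bool
abbrev VPerm : Type := Equiv.Perm CSeq

/-- Concatenation of a finite binary word with an infinite binary word. -/
def app (u : List Bool) (ω : CSeq) : CSeq := fun n =>
  if h : n < u.length then u[n] else ω (n - u.length)

/-- The finite word `u` is a prefix of the infinite word `ω`. -/
def IsPref (u : List Bool) (ω : CSeq) : Prop := ∃ ω', ω = app u ω'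

/-- The finite table of branches `T` represents the permutation `g` of the
Cantor set: the domain codes and the range codes each form a complete prefix
code, and `g` maps `uω ↦ vω` for every branch `(u, v) ∈ T`. -/
def Represents (g : VPerm) (T : Finset (List Bool × List Bool)) : Prop :=
  (∀ ω : CSeq, ∃! p : List Bool × List Bool, p ∈ T ∧ IsPref p.1 ω) ∧
  (∀ ω : CSeq, ∃! p : List Bool × List Bool, p ∈ T ∧ IsPref p.2 ω) ∧
  (∀ p ∈ T, ∀ ω : CSeq, g (app p.1 ω) = app p.2 ω)

/-- A table of branches is reduced if it contains no pair of branches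
`u0 → v0`, `u1 → v1`. -/
def Reduced (T : Finset (List Bool × List Bool)) : Prop :=
  ∀ u v : List Bool,
    ¬((u ++ [false], v ++ [false]) ∈ T ∧ (u ++ [true], v ++ [true]) ∈ T)

/-- Membership in Thompson's group `V`. -/
def InV (g : VPerm) : Prop := ∃ T, Represents g T

/-- `u → v` is a branch of the (unique) reduced representation of `g`. -/
def IsBranch (g : VPerm) (u v : List Bool) : Prop :=
  ∃ T, Represents g T ∧ Reduced T ∧ (u, v) ∈ T

/-- `N(g)`: the number of branches of the reduced representation of `g`. -/
noncomputable def Nbr (g : VPerm) : ℕ :=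
  sInf {n | ∃ T, Represents g T ∧ Reduced T ∧ T.card = n}

/-- `ℓ0(g)`: the unique `ℓ ≥ 1` such that `0^ℓ` is the range code of some
branch of `g`. -/
noncomputable def ell0 (g : VPerm) : ℕ :=
  sInf {ℓ | 1 ≤ ℓ ∧ ∃ u, IsBranch g u (List.replicate ℓ false)}

/-- `ℓ1(g)`: the unique `ℓ ≥ 1` such that `1^ℓ` is the range code of some
branch of `g`. -/
noncomputable def ell1 (g : VPerm) : ℕ :=
  sInf {ℓ | 1 ≤ ℓ ∧ ∃ u, IsBranch g u (List.replicate ℓ true)}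

/-- `w` is a strict prefix of the range code of some branch of `g`. -/
def StrictPrefOfBranch (g : VPerm) (w : List Bool) : Prop :=
  ∃ u v, IsBranch g u v ∧ w <+: v ∧ w ≠ v

/-- Strict lexicographic order on infinite binary words. -/
def lexLt (a b : CSeq) : Prop :=
  ∃ n, (∀ i < n, a i = b i) ∧ a n = false ∧ b n = true

/-- Membership in Thompson's group `F`: an element of `V` preserving the
(lexicographic) order of the Cantor set. -/
def InF (g : VPerm) : Prop :=
  InV g ∧ ∀ a b : CSeq, lexLt a b → lexLt (g a) (g b)

/-- `(a, b, c)` is a (strict) cyclically ordered triple. -/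
def cyc3 (a b c : CSeq) : Prop :=
  (lexLt a b ∧ lexLt b c) ∨ (lexLt b c ∧ lexLt c a) ∨ (lexLt c a ∧ lexLt a b)

/-- Membership in Thompson's group `T`: an element of `V` preserving the
cyclic order of the Cantor set. -/
def InT (g : VPerm) : Prop :=
  InV g ∧ ∀ a b c : CSeq, cyc3 a b c → cyc3 (g a) (g b) (g c)

/-- Word length of `g` with respect to the generating set `S` (letters are
elements of `S` or inverses of elements of `S`). -/
noncomputable def wlen (S : Set VPerm) (g : VPerm) : ℕ :=
  sInf {n | ∃ l : List VPerm,
    l.length = n ∧ (∀ x ∈ l, x ∈ S ∨ x⁻¹ ∈ S) ∧ l.prod = g}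

/-- `h'` is the copy `h_{[u]}` of `h` supported on the cylinder of `u`. -/
def IsCopy (h : VPerm) (u : List Bool) (h' : VPerm) : Prop :=
  (∀ ω : CSeq, h' (app u ω) = app u (h ω)) ∧
  (∀ ω : CSeq, ¬ IsPref u ω → h' ω = ω)

/-- Evaluation (left-to-right) of the word `w` starting at the element `g`:
the paper's product `g · w`. -/
def wordEval (g : VPerm) (w : List VPerm) : VPerm :=
  w.foldl (fun a b => a.trans b) g

/-- Branches of the generator `x0`: `00→0`, `01→10`, `1→11`. -/
def x0T : Finset (List Bool × List Bool) :=
  {([false, false], [false]), ([false, true], [true, false]),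
   ([true], [true, true])}

/-- Branches of the generator `x1`: `0→0`, `100→10`, `101→110`, `11→111`. -/
def x1T : Finset (List Bool × List Bool) :=
  {([false], [false]), ([true, false, false], [true, false]),
   ([true, false, true], [true, true, false]),
   ([true, true], [true, true, true])}

/-- Branches of the generator `c1`: `0→10`, `10→11`, `11→0`. -/
def c1T : Finset (List Bool × List Bool) :=
  {([false], [true, false]), ([true, false], [true, true]),
   ([true, true], [false])}

/-- Branches of the generator `π0`: `0→10`, `10→0`, `11→11`. -/
def pi0T : Finset (List Bool × List Bool) :=
  {([false], [true, false]), ([true, false], [false]),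
   ([true, true], [true, true])}

/-- The standard generators `x_j`, `j ≥ 0`, of `F`: for `r ≥ 1`,
`x_{r+1} = x0^{-r} · x1 · x0^{r}` in the left-to-right convention of the
paper, i.e. `x0 ^ r * x1 * (x0⁻¹) ^ r` in `Equiv.Perm`. -/
def xseq (x0 x1 : VPerm) : ℕ → VPerm
  | 0 => x0
  | r + 1 => x0 ^ r * x1 * (x0⁻¹) ^ r

section Aux




lemma app_lt {u : List Bool} {ω : CSeq} {i : ℕ} (h : i < u.length) : app u ω i = u[i] := by
  simp [app, h]

lemma app_ge {u : List Bool} {ω : CSeq} {i : ℕ} (h : u.length ≤ i) :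
    app u ω i = ω (i - u.length) := by
  simp [app, Nat.not_lt.mpr h]

lemma app_append (u v : List Bool) (ω : CSeq) : app (u ++ v) ω = app u (app v ω) := by
  funext n
  by_cases h1 : n < u.length
  · rw [app_lt (by simp; omega), app_lt h1, List.getElem_append_left h1]
  · push_neg at h1
    by_cases h2 : n < u.length + v.length
    · rw [app_lt (by simp; omega), app_ge h1, app_lt (by omega),
        List.getElem_append_right h1]
    · push_neg at h2
      rw [app_ge (by simp; omega), app_ge h1, app_ge (by omega)]
      congr 1; simp; omega

lemma app_cancel {u : List Bool} {ω ω' : CSeq} (h : app u ω = app u ω') : ω = ω' := by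
  funext n
  have := congrFun h (n + u.length)
  rwa [app_ge (by omega), app_ge (by omega), Nat.add_sub_cancel] at this

lemma isPref_app (u s : List Bool) (ω : CSeq) : IsPref u (app (u ++ s) ω) :=
  ⟨app s ω, by rw [app_append]⟩

lemma isPref_app_self (u : List Bool) (ω : CSeq) : IsPref u (app u ω) := ⟨ω, rfl⟩

lemma IsPref.of_prefix {u v : List Bool} {ω : CSeq} (h : IsPref v ω) (huv : u <+: v) :
    IsPref u ω := by
  obtain ⟨s, rfl⟩ := huv
  obtain ⟨ω', rfl⟩ := h
  exact isPref_app u s ω'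

lemma isPref_getElem {u : List Bool} {ω : CSeq} (h : IsPref u ω) {i : ℕ} (hi : i < u.length) :
    ω i = u[i] := by
  obtain ⟨ω', rfl⟩ := h; exact app_lt hi

lemma eq_of_app_eq_app {u v : List Bool} (h : ∀ ω, app u ω = app v ω) : u = v := by
  have hlen : u.length = v.length := by
    by_contra hne
    rcases Nat.lt_or_ge u.length v.length with hlt | hge
    · have := congrFun (h (fun _ => !v[u.length])) u.length
      rw [app_ge (le_refl _), app_lt hlt] at this
      simp at this
    · have hlt : v.length < u.length := by omega
      have := congrFun (h (fun _ => !u[v.length])) v.length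
      rw [app_lt hlt, app_ge (le_refl _)] at this
      simp at this
  apply List.ext_getElem hlen
  intro i h1 h2
  have := congrFun (h (fun _ => false)) i
  rwa [app_lt h1, app_lt h2] at this

lemma pref_total {u v : List Bool} {ω : CSeq} (hu : IsPref u ω) (hv : IsPref v ω) :
    u <+: v ∨ v <+: u := by
  have key : ∀ {a b : List Bool}, IsPref a ω → IsPref b ω → a.length ≤ b.length → a <+: b := by
    intro a b ha hb hle
    have : a = b.take a.length := by
      apply List.ext_getElem (by simp [hle])
      intro i h1 h2
      rw [List.getElem_take]
      rw [← isPref_getElem ha h1, isPref_getElem hb (by omega)]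
    rw [this]
    exact List.take_prefix _ _
  rcases le_total u.length v.length with h | h
  · exact Or.inl (key hu hv h)
  · exact Or.inr (key hv hu h)


def Simp (g : VPerm) (u v : List Bool) : Prop := ∀ ω, g (app u ω) = app v ω

lemma Simp.append {g : VPerm} {u v : List Bool} (h : Simp g u v) (s : List Bool) :
    Simp g (u ++ s) (v ++ s) := fun ω => by
  rw [app_append, app_append, h]

lemma Simp.unique {g : VPerm} {u v v' : List Bool} (h : Simp g u v) (h' : Simp g u v') :
    v = v' :=
  eq_of_app_eq_app fun ω => by rw [← h ω, ← h' ω]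

namespace Represents

variable {g : VPerm} {T : Finset (List Bool × List Bool)}

lemma simp_of_mem (hT : Represents g T) {p : List Bool × List Bool} (hp : p ∈ T) :
    Simp g p.1 p.2 := fun ω => hT.2.2 p hp ω

lemma dom_eq (hT : Represents g T) {p q : List Bool × List Bool} (hp : p ∈ T) (hq : q ∈ T)
    {ω : CSeq} (h1 : IsPref p.1 ω) (h2 : IsPref q.1 ω) : p = q := by
  obtain ⟨r, _, hr⟩ := hT.1 ω
  rw [hr p ⟨hp, h1⟩, hr q ⟨hq, h2⟩]

lemma ran_eq (hT : Represents g T) {p q : List Bool × List Bool} (hp : p ∈ T) (hq : q ∈ T)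
    {ω : CSeq} (h1 : IsPref p.2 ω) (h2 : IsPref q.2 ω) : p = q := by
  obtain ⟨r, _, hr⟩ := hT.2.1 ω
  rw [hr p ⟨hp, h1⟩, hr q ⟨hq, h2⟩]

lemma dom_antichain (hT : Represents g T) {p q : List Bool × List Bool} (hp : p ∈ T)
    (hq : q ∈ T) (h : p.1 <+: q.1) : p = q := by
  obtain ⟨s, hs⟩ := h
  exact hT.dom_eq hp hq (hs ▸ isPref_app p.1 s (fun _ => false))
    (isPref_app_self q.1 (fun _ => false))

lemma ran_antichain (hT : Represents g T) {p q : List Bool × List Bool} (hp : p ∈ T)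
    (hq : q ∈ T) (h : p.2 <+: q.2) : p = q := by
  obtain ⟨s, hs⟩ := h
  exact hT.ran_eq hp hq (hs ▸ isPref_app p.2 s (fun _ => false))
    (isPref_app_self q.2 (fun _ => false))

lemma dom_inj (hT : Represents g T) {p q : List Bool × List Bool} (hp : p ∈ T)
    (hq : q ∈ T) (h : p.1 = q.1) : p = q :=
  hT.dom_antichain hp hq (h ▸ List.prefix_refl p.1)

lemma ran_inj (hT : Represents g T) {p q : List Bool × List Bool} (hp : p ∈ T)
    (hq : q ∈ T) (h : p.2 = q.2) : p = q :=
  hT.ran_antichain hp hq (h ▸ List.prefix_refl p.2)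

end Represents

lemma isPref_of_forall {u : List Bool} {ω : CSeq} (h : ∀ i (hi : i < u.length), ω i = u[i]) :
    IsPref u ω := by
  refine ⟨fun n => ω (n + u.length), ?_⟩
  funext n
  by_cases hn : n < u.length
  · rw [app_lt hn]; exact h n hn
  · rw [app_ge (by omega)]; congr 1; omega

lemma isPref_concat_iff {a : List Bool} {i : Bool} {ω : CSeq} :
    IsPref (a ++ [i]) ω ↔ IsPref a ω ∧ ω a.length = i := by
  constructor
  · intro h
    refine ⟨h.of_prefix (List.prefix_append a [i]), ?_⟩
    have := isPref_getElem h (i := a.length) (by simp)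
    rw [List.getElem_append_right (le_refl _)] at this
    simpa using this
  · rintro ⟨h1, h2⟩
    apply isPref_of_forall
    intro j hj
    simp only [List.length_append, List.length_singleton] at hj
    by_cases hja : j < a.length
    · rw [List.getElem_append_left hja]; exact isPref_getElem h1 hja
    · have : j = a.length := by omega
      subst this
      rw [List.getElem_append_right (le_refl _)]
      simpa using h2

lemma represents_refine {g : VPerm} {T : Finset (List Bool × List Bool)}
    (hT : Represents g T) {a b : List Bool} (hab : (a, b) ∈ T) :
    Represents g (insert (a ++ [false], b ++ [false])
      (insert (a ++ [true], b ++ [true]) (T.erase (a, b)))) := by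
  refine ⟨?_, ?_, ?_⟩
  · -- domain completeness
    intro ω
    obtain ⟨p, ⟨hpT, hp1⟩, hpu⟩ := hT.1 ω
    by_cases hpa : p = (a, b)
    · subst hpa
      refine ⟨(a ++ [ω a.length], b ++ [ω a.length]), ⟨?_, ?_⟩, ?_⟩
      · cases h : ω a.length <;> simp [h]
      · exact isPref_concat_iff.mpr ⟨hp1, rfl⟩
      · rintro q ⟨hqmem, hq1⟩
        rcases Finset.mem_insert.mp hqmem with rfl | hqmem
        · have := (isPref_concat_iff.mp hq1).2
          rw [← this]
        rcases Finset.mem_insert.mp hqmem with rfl | hqmem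
        · have := (isPref_concat_iff.mp hq1).2
          rw [← this]
        · exfalso
          have := hpu q ⟨Finset.mem_of_mem_erase hqmem, hq1⟩
          exact (Finset.mem_erase.mp hqmem).1 this
    · refine ⟨p, ⟨?_, hp1⟩, ?_⟩
      · exact Finset.mem_insert_of_mem (Finset.mem_insert_of_mem
          (Finset.mem_erase.mpr ⟨hpa, hpT⟩))
      · rintro q ⟨hqmem, hq1⟩
        rcases Finset.mem_insert.mp hqmem with rfl | hqmem
        · exact absurd (hpu (a, b) ⟨hab, hq1.of_prefix (List.prefix_append a _)⟩).symm hpa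
        rcases Finset.mem_insert.mp hqmem with rfl | hqmem
        · exact absurd (hpu (a, b) ⟨hab, hq1.of_prefix (List.prefix_append a _)⟩).symm hpa
        · exact hpu q ⟨Finset.mem_of_mem_erase hqmem, hq1⟩
  · -- range completeness
    intro ω
    obtain ⟨p, ⟨hpT, hp1⟩, hpu⟩ := hT.2.1 ω
    by_cases hpa : p = (a, b)
    · subst hpa
      refine ⟨(a ++ [ω b.length], b ++ [ω b.length]), ⟨?_, ?_⟩, ?_⟩
      · cases h : ω b.length <;> simp [h]
      · exact isPref_concat_iff.mpr ⟨hp1, rfl⟩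
      · rintro q ⟨hqmem, hq1⟩
        rcases Finset.mem_insert.mp hqmem with rfl | hqmem
        · have := (isPref_concat_iff.mp hq1).2
          rw [← this]
        rcases Finset.mem_insert.mp hqmem with rfl | hqmem
        · have := (isPref_concat_iff.mp hq1).2
          rw [← this]
        · exfalso
          have := hpu q ⟨Finset.mem_of_mem_erase hqmem, hq1⟩
          exact (Finset.mem_erase.mp hqmem).1 this
    · refine ⟨p, ⟨?_, hp1⟩, ?_⟩
      · exact Finset.mem_insert_of_mem (Finset.mem_insert_of_mem
          (Finset.mem_erase.mpr ⟨hpa, hpT⟩))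
      · rintro q ⟨hqmem, hq1⟩
        rcases Finset.mem_insert.mp hqmem with rfl | hqmem
        · exact absurd (hpu (a, b) ⟨hab, hq1.of_prefix (List.prefix_append b _)⟩).symm hpa
        rcases Finset.mem_insert.mp hqmem with rfl | hqmem
        · exact absurd (hpu (a, b) ⟨hab, hq1.of_prefix (List.prefix_append b _)⟩).symm hpa
        · exact hpu q ⟨Finset.mem_of_mem_erase hqmem, hq1⟩
  · -- mapping
    intro p hp ω
    rcases Finset.mem_insert.mp hp with rfl | hp
    · exact (hT.simp_of_mem hab).append [false] ω
    rcases Finset.mem_insert.mp hp with rfl | hp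
    · exact (hT.simp_of_mem hab).append [true] ω
    · exact hT.2.2 p (Finset.mem_of_mem_erase hp) ω

lemma represents_comp {g h : VPerm} {T H : Finset (List Bool × List Bool)}
    {F : List Bool × List Bool → List Bool × List Bool}
    (hT : Represents g T) (hH : Represents h H)
    (hF : ∀ p ∈ T, (F p).1 = p.1 ∧
      ∃ d e s : List Bool, (d, e) ∈ H ∧ p.2 = d ++ s ∧ (F p).2 = e ++ s) :
    Represents (g.trans h) (T.image F) := by
  refine ⟨?_, ?_, ?_⟩
  · -- domain completeness
    intro ω
    obtain ⟨p, ⟨hpT, hp1⟩, hpu⟩ := hT.1 ω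
    refine ⟨F p, ⟨Finset.mem_image_of_mem F hpT, (hF p hpT).1 ▸ hp1⟩, ?_⟩
    rintro q ⟨hq, hq1⟩
    obtain ⟨r, hrT, rfl⟩ := Finset.mem_image.mp hq
    rw [(hF r hrT).1] at hq1
    rw [hpu r ⟨hrT, hq1⟩]
  · -- range completeness
    intro ω
    obtain ⟨q0, ⟨hq0H, hq0e⟩, _⟩ := hH.2.1 ω
    obtain ⟨σ, rfl⟩ := hq0e
    obtain ⟨p, ⟨hpT, hp2⟩, hpu⟩ := hT.2.1 (app q0.1 σ)
    obtain ⟨hF1, d, e, s, hdeH, hp2eq, hFp2⟩ := hF p hpT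
    have hde : (d, e) = q0 := by
      refine hH.dom_eq hdeH hq0H (ω := app q0.1 σ) ?_ (isPref_app_self _ _)
      exact hp2.of_prefix ⟨s, hp2eq.symm⟩
    obtain ⟨τ, hτ⟩ := hp2
    rw [hp2eq, app_append] at hτ
    rw [← hde] at hτ hpu ⊢
    have hστ : σ = app s τ := app_cancel hτ
    have hFpref : IsPref (F p).2 (app e σ) := by
      rw [hFp2, hστ, ← app_append]
      exact isPref_app_self _ _
    refine ⟨F p, ⟨Finset.mem_image_of_mem F hpT, hFpref⟩, ?_⟩
    rintro q ⟨hq, hq2⟩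
    obtain ⟨r, hrT, rfl⟩ := Finset.mem_image.mp hq
    obtain ⟨hF1r, d', e', s', hdeH', hr2, hFr2⟩ := hF r hrT
    rw [hFr2] at hq2
    have hee : (d', e') = (d, e) := by
      refine hH.ran_eq hdeH' hdeH (ω := app e σ) ?_ (isPref_app_self _ _)
      exact hq2.of_prefix (List.prefix_append e' s')
    rw [Prod.mk.injEq] at hee
    obtain ⟨hd, he⟩ := hee
    rw [he] at hq2
    rw [hd] at hr2
    obtain ⟨τ', hτ'⟩ := hq2
    rw [app_append] at hτ'
    have hστ' : σ = app s' τ' := app_cancel hτ'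
    have : IsPref r.2 (app d σ) := by
      rw [hr2, hστ', ← app_append]
      exact isPref_app_self _ _
    rw [hpu r ⟨hrT, this⟩]
  · -- mapping
    intro q hq ω
    obtain ⟨p, hpT, rfl⟩ := Finset.mem_image.mp hq
    obtain ⟨hF1, d, e, s, hdeH, hp2eq, hFp2⟩ := hF p hpT
    rw [hF1, hFp2, Equiv.trans_apply, hT.2.2 p hpT ω, hp2eq, app_append, app_append,
      hH.2.2 (d, e) hdeH (app s ω)]

lemma no_strict {g : VPerm} {T T' : Finset (List Bool × List Bool)}
    (hT : Represents g T) (hT' : Represents g T') (hRed' : Reduced T') :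
    ∀ p' ∈ T', ∀ p ∈ T, p.1 <+: p'.1 → p.1 = p'.1 := by
  classical
  by_contra hbad
  push_neg at hbad
  obtain ⟨p', hp'T, p, hpT, hpre, hne⟩ := hbad
  set S := T'.filter (fun q => ∃ r ∈ T, r.1 <+: q.1 ∧ r.1 ≠ q.1) with hSdef
  have hSne : S.Nonempty := ⟨p', Finset.mem_filter.mpr ⟨hp'T, p, hpT, hpre, hne⟩⟩
  obtain ⟨m, hmS, hmax⟩ := S.exists_max_image (fun q => q.1.length) hSne
  obtain ⟨hmT', p0, hp0T, hp0pre, hp0ne⟩ := Finset.mem_filter.mp hmS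
  have hp0lt : p0.1.length < m.1.length :=
    lt_of_le_of_ne hp0pre.length_le (fun hl => hp0ne (hp0pre.eq_of_length hl))
  have hm1ne : m.1 ≠ [] := by
    intro h; rw [h] at hp0lt; simp at hp0lt
  obtain ⟨w, b, hwb⟩ : ∃ w b, m.1 = w ++ [b] :=
    ⟨_, _, (List.dropLast_append_getLast hm1ne).symm⟩
  have hwlen : m.1.length = w.length + 1 := by simp [hwb]
  have hp0w : p0.1 <+: w :=
    List.prefix_of_prefix_length_le hp0pre
      (by rw [hwb]; exact List.prefix_append w [b]) (by omega)
  obtain ⟨q'', ⟨hq''T', hq''pre⟩, -⟩ := hT'.1 (app (w ++ [!b]) (fun _ => false))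
  have hq''s : q''.1 = w ++ [!b] := by
    rcases pref_total hq''pre (isPref_app_self (w ++ [!b]) _) with hc | hc
    · rcases eq_or_ne q''.1 (w ++ [!b]) with h | h
      · exact h
      exfalso
      have hlen2 : q''.1.length < (w ++ [!b]).length :=
        lt_of_le_of_ne hc.length_le (fun hl => h (hc.eq_of_length hl))
      have hlen3 : q''.1.length ≤ w.length := by simp at hlen2; omega
      have hq''w : q''.1 <+: w :=
        List.prefix_of_prefix_length_le hc (List.prefix_append w [!b]) hlen3
      have hq''m : q''.1 <+: m.1 := by
        rw [hwb]; exact hq''w.trans (List.prefix_append w [b])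
      have heq := hT'.dom_antichain hq''T' hmT' hq''m
      rw [heq] at hlen3
      omega
    · rcases eq_or_ne q''.1 (w ++ [!b]) with h | h
      · exact h
      exfalso
      have hlen2 : (w ++ [!b]).length < q''.1.length :=
        lt_of_le_of_ne hc.length_le (fun hl => h ((hc.eq_of_length hl).symm))
      have hlen3 : w.length + 1 < q''.1.length := by simpa using hlen2
      have hq''S : q'' ∈ S := by
        refine Finset.mem_filter.mpr ⟨hq''T', p0, hp0T,
          (hp0w.trans (List.prefix_append w [!b])).trans hc, ?_⟩
        intro hEq
        have := congrArg List.length hEq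
        omega
      have := hmax q'' hq''S
      omega
  obtain ⟨t, ht⟩ := hp0w
  have hsimb : Simp g (w ++ [b]) ((p0.2 ++ t) ++ [b]) := by
    have := (hT.simp_of_mem hp0T).append (t ++ [b])
    rwa [← List.append_assoc, ← List.append_assoc, ht] at this
  have hsimnb : Simp g (w ++ [!b]) ((p0.2 ++ t) ++ [!b]) := by
    have := (hT.simp_of_mem hp0T).append (t ++ [!b])
    rwa [← List.append_assoc, ← List.append_assoc, ht] at this
  have hm2 : m.2 = (p0.2 ++ t) ++ [b] := by
    have h1 : Simp g (w ++ [b]) m.2 := by rw [← hwb]; exact hT'.simp_of_mem hmT'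
    exact Simp.unique h1 hsimb
  have hq2 : q''.2 = (p0.2 ++ t) ++ [!b] := by
    have h1 : Simp g (w ++ [!b]) q''.2 := by rw [← hq''s]; exact hT'.simp_of_mem hq''T'
    exact Simp.unique h1 hsimnb
  have hmpair : (w ++ [b], (p0.2 ++ t) ++ [b]) ∈ T' := by
    have : m = (w ++ [b], (p0.2 ++ t) ++ [b]) := Prod.ext hwb hm2
    rw [← this]; exact hmT'
  have hqpair : (w ++ [!b], (p0.2 ++ t) ++ [!b]) ∈ T' := by
    have : q'' = (w ++ [!b], (p0.2 ++ t) ++ [!b]) := Prod.ext hq''s hq2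
    rw [← this]; exact hq''T'
  cases b
  · exact hRed' w (p0.2 ++ t) ⟨hmpair, by simpa using hqpair⟩
  · exact hRed' w (p0.2 ++ t) ⟨by simpa using hqpair, hmpair⟩

lemma reduced_unique {g : VPerm} {T T' : Finset (List Bool × List Bool)}
    (hT : Represents g T) (hR : Reduced T) (hT' : Represents g T') (hR' : Reduced T') :
    T = T' := by
  have key : ∀ {A B : Finset (List Bool × List Bool)},
      Represents g A → Reduced A → Represents g B → Reduced B → A ⊆ B := by
    intro A B hA _ hB hRB p hp
    obtain ⟨q, ⟨hqB, hqpre⟩, -⟩ := hB.1 (app p.1 (fun _ => false))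
    have h1 : p.1 = q.1 := by
      rcases pref_total (isPref_app_self p.1 _) hqpre with hc | hc
      · exact no_strict hA hB hRB q hqB p hp hc
      · exact (no_strict hB hA ‹Reduced A› p hp q hqB hc).symm
    have h2 : p.2 = q.2 := by
      have := hB.simp_of_mem hqB
      rw [← h1] at this
      exact Simp.unique (hA.simp_of_mem hp) this
    have : p = q := Prod.ext h1 h2
    rw [this]; exact hqB
  exact subset_antisymm (key hT hR hT' hR') (key hT' hR' hT hR)

lemma nbr_eq_card {g : VPerm} {T : Finset (List Bool × List Bool)}
    (hT : Represents g T) (hR : Reduced T) :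
    sInf {n | ∃ T', Represents g T' ∧ Reduced T' ∧ T'.card = n} = T.card := by
  have : {n | ∃ T', Represents g T' ∧ Reduced T' ∧ T'.card = n} = {T.card} := by
    ext n
    constructor
    · rintro ⟨T', hT', hR', rfl⟩
      rw [reduced_unique hT' hR' hT hR]
      rfl
    · rintro rfl
      exact ⟨T, hT, hR, rfl⟩
  rw [this, csInf_singleton]



def f0 : List Bool → List Bool
  | false :: false :: s => false :: s
  | false :: true :: s => true :: false :: s
  | true :: s => true :: true :: s
  | [false] => []
  | [] => []

def f1i : List Bool → List Bool
  | false :: s => false :: s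
  | true :: false :: s => true :: false :: false :: s
  | true :: true :: false :: s => true :: false :: true :: s
  | true :: true :: true :: s => true :: true :: s
  | [true] => []
  | [true, true] => []
  | [] => []

def f0i : List Bool → List Bool
  | false :: s => false :: false :: s
  | true :: false :: s => false :: true :: s
  | true :: true :: s => true :: s
  | [true] => []
  | [] => []

lemma concat_inj {v w : List Bool} {a b : Bool} (h : v ++ [a] = w ++ [b]) : v = w ∧ a = b := by
  obtain ⟨h1, h2⟩ := List.append_inj' h rfl
  exact ⟨h1, by simpa using h2⟩

lemma represents_inv {h : VPerm} {H : Finset (List Bool × List Bool)} (hH : Represents h H) :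
    Represents h⁻¹ (H.image Prod.swap) := by
  refine ⟨?_, ?_, ?_⟩
  · intro ω
    obtain ⟨p, ⟨hp, hp2⟩, hu⟩ := hH.2.1 ω
    refine ⟨p.swap, ⟨Finset.mem_image_of_mem _ hp, hp2⟩, ?_⟩
    rintro q ⟨hq, hq1⟩
    obtain ⟨r, hr, rfl⟩ := Finset.mem_image.mp hq
    rw [hu r ⟨hr, hq1⟩]
  · intro ω
    obtain ⟨p, ⟨hp, hp1⟩, hu⟩ := hH.1 ω
    refine ⟨p.swap, ⟨Finset.mem_image_of_mem _ hp, hp1⟩, ?_⟩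
    rintro q ⟨hq, hq2⟩
    obtain ⟨r, hr, rfl⟩ := Finset.mem_image.mp hq
    rw [hu r ⟨hr, hq2⟩]
  · intro q hq ω
    obtain ⟨r, hr, rfl⟩ := Finset.mem_image.mp hq
    show h⁻¹ (app r.2 ω) = app r.1 ω
    rw [← hH.2.2 r hr ω]
    exact Equiv.symm_apply_apply h _

lemma cons_eq_concat {x : Bool} {r v : List Bool} {a : Bool} (h : x :: r = v ++ [a]) :
    (v = [] ∧ x = a ∧ r = []) ∨ ∃ v', v = x :: v' ∧ r = v' ++ [a] := by
  cases v with
  | nil =>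
    simp at h
    exact Or.inl ⟨rfl, h.1, h.2⟩
  | cons c v' =>
    rw [List.cons_append] at h
    injection h with h1 h2
    exact Or.inr ⟨v', by rw [h1], h2⟩


end Aux

/-- Let `g ∈ V` with `N(g) ≥ 4` such that `0` is the range
code of some branch of `g`, and let `g1 = g·x0²·x1⁻¹·x0⁻¹` (left-to-right
products).  Then `0` is not the range code of any branch of `g1` (in fact `0`
is a strict prefix of the range code of some branch of `g1`),
`N(g1) ≤ N(g)+2`, and `N(g·w') ≥ N(g)` for every prefix `w'` of
`x0·x0·x1⁻¹·x0⁻¹`. -/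
theorem stmt10 (x0 x1 : VPerm)
    (hx0 : Represents x0 x0T) (hx1 : Represents x1 x1T)
    (g : VPerm) (hg : InV g) (hN : 4 ≤ Nbr g)
    (hbr : ∃ u : List Bool, IsBranch g u [false]) :
    (¬ ∃ u : List Bool, IsBranch (((g.trans (x0 ^ 2)).trans x1⁻¹).trans x0⁻¹) u [false]) ∧
    StrictPrefOfBranch (((g.trans (x0 ^ 2)).trans x1⁻¹).trans x0⁻¹) [false] ∧
    Nbr (((g.trans (x0 ^ 2)).trans x1⁻¹).trans x0⁻¹) ≤ Nbr g + 2 ∧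
    Nbr g ≤ Nbr (g.trans x0) ∧
    Nbr g ≤ Nbr (g.trans (x0 ^ 2)) ∧
    Nbr g ≤ Nbr ((g.trans (x0 ^ 2)).trans x1⁻¹) ∧
    Nbr g ≤ Nbr (((g.trans (x0 ^ 2)).trans x1⁻¹).trans x0⁻¹) := by
  classical
  obtain ⟨u₀, T, hTrep, hTred, hTmem⟩ := hbr
  set T'' := T.erase (u₀, [false]) with hT''def
  have hsubT : ∀ p ∈ T'', p ∈ T := fun p hp => Finset.mem_of_mem_erase hp
  have htrue : ∀ p ∈ T'', ∃ s, p.2 = true :: s := by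
    intro p hp
    have hpT := hsubT p hp
    have hpne := (Finset.mem_erase.mp hp).1
    cases hv : p.2 with
    | nil =>
      exfalso
      exact hpne (hTrep.ran_antichain hpT hTmem (by rw [hv]; exact List.nil_prefix))
    | cons c s =>
      cases c with
      | false =>
        exfalso
        have hpref : (u₀, [false]).2 <+: p.2 := by rw [hv]; exact ⟨s, rfl⟩
        exact hpne (hTrep.ran_antichain hTmem hpT hpref).symm
      | true => exact ⟨s, rfl⟩
  -- Step 1 : g · x0
  have h1 : Represents g (insert (u₀ ++ [false], [false] ++ [false])
      (insert (u₀ ++ [true], [false] ++ [true]) T'')) := represents_refine hTrep hTmem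
  have h2 : Represents (g.trans x0)
      ((insert (u₀ ++ [false], [false] ++ [false])
        (insert (u₀ ++ [true], [false] ++ [true]) T'')).image
          (fun p => (p.1, f0 p.2))) := by
    refine represents_comp h1 hx0 ?_
    intro p hp
    refine ⟨rfl, ?_⟩
    rcases Finset.mem_insert.mp hp with rfl | hp
    · exact ⟨[false, false], [false], [], by decide, rfl, rfl⟩
    rcases Finset.mem_insert.mp hp with rfl | hp
    · exact ⟨[false, true], [true, false], [], by decide, rfl, rfl⟩
    · obtain ⟨s, hs⟩ := htrue p hp
      exact ⟨[true], [true, true], s, by decide, by rw [hs]; rfl, by rw [hs]; rfl⟩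
  rw [Finset.image_insert, Finset.image_insert,
    show T''.image (fun p => (p.1, f0 p.2)) = T''.image (fun p => (p.1, true :: p.2)) from
      Finset.image_congr (fun p hp => by
        obtain ⟨s, hs⟩ := htrue p (Finset.mem_coe.mp hp)
        show (p.1, f0 p.2) = (p.1, true :: p.2)
        rw [hs]; rfl),
    show ((u₀ ++ [false], [false] ++ [false]).1, f0 (u₀ ++ [false], [false] ++ [false]).2)
      = (u₀ ++ [false], [false]) from rfl,
    show ((u₀ ++ [true], [false] ++ [true]).1, f0 (u₀ ++ [true], [false] ++ [true]).2)
      = (u₀ ++ [true], [true, false]) from rfl] at h2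
  -- h2 : Represents (g.trans x0) T2
  -- Step 2 : g · x0²
  have hmem2 : (u₀ ++ [false], [false]) ∈
      insert (u₀ ++ [false], [false])
        (insert (u₀ ++ [true], [true, false])
          (T''.image fun p => (p.1, true :: p.2))) := Finset.mem_insert_self _ _
  have h3 := represents_refine h2 hmem2
  rw [show (insert (u₀ ++ [false], [false])
        (insert (u₀ ++ [true], [true, false])
          (T''.image fun p => (p.1, true :: p.2)))).erase (u₀ ++ [false], [false])
      = insert (u₀ ++ [true], [true, false]) (T''.image fun p => (p.1, true :: p.2)) by
    apply Finset.erase_insert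
    intro hmem
    rcases Finset.mem_insert.mp hmem with h | h
    · simp at h
    · obtain ⟨q, hq, hq2⟩ := Finset.mem_image.mp h
      rw [Prod.ext_iff] at hq2
      simp at hq2] at h3
  have h4 : Represents ((g.trans x0).trans x0)
      ((insert ((u₀ ++ [false]) ++ [false], [false] ++ [false])
        (insert ((u₀ ++ [false]) ++ [true], [false] ++ [true])
          (insert (u₀ ++ [true], [true, false])
            (T''.image fun p => (p.1, true :: p.2))))).image
              (fun p => (p.1, f0 p.2))) := by
    refine represents_comp h3 hx0 ?_
    intro p hp
    refine ⟨rfl, ?_⟩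
    rcases Finset.mem_insert.mp hp with rfl | hp
    · exact ⟨[false, false], [false], [], by decide, rfl, rfl⟩
    rcases Finset.mem_insert.mp hp with rfl | hp
    · exact ⟨[false, true], [true, false], [], by decide, rfl, rfl⟩
    rcases Finset.mem_insert.mp hp with rfl | hp
    · exact ⟨[true], [true, true], [false], by decide, rfl, rfl⟩
    · obtain ⟨q, hq, rfl⟩ := Finset.mem_image.mp hp
      exact ⟨[true], [true, true], q.2, by decide, rfl, rfl⟩
  rw [Finset.image_insert, Finset.image_insert, Finset.image_insert,
    Finset.image_image,
    show (((u₀ ++ [false]) ++ [false], [false] ++ [false]).1,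
        f0 ((u₀ ++ [false]) ++ [false], [false] ++ [false]).2)
      = ((u₀ ++ [false]) ++ [false], [false]) from rfl,
    show (((u₀ ++ [false]) ++ [true], [false] ++ [true]).1,
        f0 ((u₀ ++ [false]) ++ [true], [false] ++ [true]).2)
      = ((u₀ ++ [false]) ++ [true], [true, false]) from rfl,
    show ((u₀ ++ [true], [true, false]).1, f0 (u₀ ++ [true], [true, false]).2)
      = (u₀ ++ [true], [true, true, false]) from rfl,
    show ((fun p : List Bool × List Bool => (p.1, f0 p.2)) ∘
        (fun p : List Bool × List Bool => (p.1, true :: p.2)))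
      = (fun p : List Bool × List Bool => (p.1, true :: true :: p.2)) from rfl] at h4
  have hBA : g.trans (x0 ^ 2) = (g.trans x0).trans x0 := by
    apply Equiv.ext
    intro ω
    simp [sq, Equiv.Perm.mul_apply]
  rw [← hBA] at h4
  -- h4 : Represents (g.trans (x0^2)) T3
  -- Step 3 : · x1⁻¹
  have hx1i := represents_inv hx1
  have h5 : Represents ((g.trans (x0 ^ 2)).trans x1⁻¹)
      ((insert ((u₀ ++ [false]) ++ [false], [false])
        (insert ((u₀ ++ [false]) ++ [true], [true, false])
          (insert (u₀ ++ [true], [true, true, false])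
            (T''.image fun p => (p.1, true :: true :: p.2))))).image
              (fun p => (p.1, f1i p.2))) := by
    refine represents_comp h4 hx1i ?_
    intro p hp
    refine ⟨rfl, ?_⟩
    rcases Finset.mem_insert.mp hp with rfl | hp
    · exact ⟨[false], [false], [], by decide, rfl, rfl⟩
    rcases Finset.mem_insert.mp hp with rfl | hp
    · exact ⟨[true, false], [true, false, false], [], by decide, rfl, rfl⟩
    rcases Finset.mem_insert.mp hp with rfl | hp
    · exact ⟨[true, true, false], [true, false, true], [], by decide, rfl, rfl⟩
    · obtain ⟨q, hq, rfl⟩ := Finset.mem_image.mp hp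
      obtain ⟨s, hs⟩ := htrue q hq
      exact ⟨[true, true, true], [true, true], s, by decide,
        by show true :: true :: q.2 = _; rw [hs]; rfl,
        by show f1i (true :: true :: q.2) = _; rw [hs]; rfl⟩
  rw [Finset.image_insert, Finset.image_insert, Finset.image_insert,
    Finset.image_image,
    show (((u₀ ++ [false]) ++ [false], [false]).1, f1i ((u₀ ++ [false]) ++ [false], [false]).2)
      = ((u₀ ++ [false]) ++ [false], [false]) from rfl,
    show (((u₀ ++ [false]) ++ [true], [true, false]).1,
        f1i ((u₀ ++ [false]) ++ [true], [true, false]).2)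
      = ((u₀ ++ [false]) ++ [true], [true, false, false]) from rfl,
    show ((u₀ ++ [true], [true, true, false]).1, f1i (u₀ ++ [true], [true, true, false]).2)
      = (u₀ ++ [true], [true, false, true]) from rfl,
    show T''.image ((fun p : List Bool × List Bool => (p.1, f1i p.2)) ∘
        (fun p : List Bool × List Bool => (p.1, true :: true :: p.2)))
      = T''.image (fun p : List Bool × List Bool => (p.1, true :: p.2)) from
      Finset.image_congr (fun p hp => by
        obtain ⟨s, hs⟩ := htrue p (Finset.mem_coe.mp hp)
        show (p.1, f1i (true :: true :: p.2)) = (p.1, true :: p.2)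
        rw [hs]; rfl)] at h5
  -- h5 : Represents C T4
  -- Step 4 : · x0⁻¹
  have hx0i := represents_inv hx0
  have h6 : Represents (((g.trans (x0 ^ 2)).trans x1⁻¹).trans x0⁻¹)
      ((insert ((u₀ ++ [false]) ++ [false], [false])
        (insert ((u₀ ++ [false]) ++ [true], [true, false, false])
          (insert (u₀ ++ [true], [true, false, true])
            (T''.image fun p => (p.1, true :: p.2))))).image
              (fun p => (p.1, f0i p.2))) := by
    refine represents_comp h5 hx0i ?_
    intro p hp
    refine ⟨rfl, ?_⟩
    rcases Finset.mem_insert.mp hp with rfl | hp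
    · exact ⟨[false], [false, false], [], by decide, rfl, rfl⟩
    rcases Finset.mem_insert.mp hp with rfl | hp
    · exact ⟨[true, false], [false, true], [false], by decide, rfl, rfl⟩
    rcases Finset.mem_insert.mp hp with rfl | hp
    · exact ⟨[true, false], [false, true], [true], by decide, rfl, rfl⟩
    · obtain ⟨q, hq, rfl⟩ := Finset.mem_image.mp hp
      obtain ⟨s, hs⟩ := htrue q hq
      exact ⟨[true, true], [true], s, by decide,
        by show true :: q.2 = _; rw [hs]; rfl,
        by show f0i (true :: q.2) = _; rw [hs]; rfl⟩
  rw [Finset.image_insert, Finset.image_insert, Finset.image_insert,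
    Finset.image_image,
    show (((u₀ ++ [false]) ++ [false], [false]).1, f0i ((u₀ ++ [false]) ++ [false], [false]).2)
      = ((u₀ ++ [false]) ++ [false], [false, false]) from rfl,
    show (((u₀ ++ [false]) ++ [true], [true, false, false]).1,
        f0i ((u₀ ++ [false]) ++ [true], [true, false, false]).2)
      = ((u₀ ++ [false]) ++ [true], [false, true, false]) from rfl,
    show ((u₀ ++ [true], [true, false, true]).1, f0i (u₀ ++ [true], [true, false, true]).2)
      = (u₀ ++ [true], [false, true, true]) from rfl,
    show T''.image ((fun p : List Bool × List Bool => (p.1, f0i p.2)) ∘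
        (fun p : List Bool × List Bool => (p.1, true :: p.2)))
      = T'' from by
      rw [show T''.image ((fun p : List Bool × List Bool => (p.1, f0i p.2)) ∘
          (fun p : List Bool × List Bool => (p.1, true :: p.2)))
        = T''.image (fun p => p) from
        Finset.image_congr (fun p hp => by
          obtain ⟨s, hs⟩ := htrue p (Finset.mem_coe.mp hp)
          show (p.1, f0i (true :: p.2)) = p
          exact Prod.ext rfl (by rw [hs]; rfl))]
      exact Finset.image_id] at h6
  -- h6 : Represents D T5
  -- `Nbr` via the unique reduced representation
  have Nbr_eq : ∀ (g' : VPerm) (T' : Finset (List Bool × List Bool)),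
      Represents g' T' → Reduced T' → Nbr g' = T'.card := by
    intro g' T' h1 h2
    exact nbr_eq_card h1 h2
  -- Reducedness of the four tables
  have hRed2 : Reduced (insert (u₀ ++ [false], [false])
      (insert (u₀ ++ [true], [true, false]) (T''.image fun p => (p.1, true :: p.2)))) := by
    rintro u v ⟨h0, h1⟩
    rcases Finset.mem_insert.mp h0 with e0 | h0
    · rw [Prod.ext_iff] at e0
      obtain ⟨e0a, e0b⟩ := e0
      obtain ⟨hv, -⟩ := concat_inj (show v ++ [false] = [] ++ [false] by simpa using e0b)
      subst hv
      rcases Finset.mem_insert.mp h1 with e1 | h1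
      · rw [Prod.ext_iff] at e1
        exact absurd (concat_inj e1.1).2 (by simp)
      rcases Finset.mem_insert.mp h1 with e1 | h1
      · rw [Prod.ext_iff] at e1
        simpa using e1.2
      · obtain ⟨q, hq, hq2⟩ := Finset.mem_image.mp h1
        obtain ⟨s, hs⟩ := htrue q hq
        rw [Prod.ext_iff, hs] at hq2
        simpa using hq2.2
    rcases Finset.mem_insert.mp h0 with e0 | h0
    · rw [Prod.ext_iff] at e0
      exact absurd (concat_inj e0.1).2 (by simp)
    · obtain ⟨q, hq, hq2⟩ := Finset.mem_image.mp h0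
      rw [Prod.ext_iff] at hq2
      obtain ⟨hq2a, hq2b⟩ := hq2
      rcases cons_eq_concat hq2b with ⟨-, hf, -⟩ | ⟨v1, rfl, hb1⟩
      · simp at hf
      rcases Finset.mem_insert.mp h1 with e1 | h1
      · rw [Prod.ext_iff] at e1
        exact absurd (concat_inj e1.1).2 (by simp)
      rcases Finset.mem_insert.mp h1 with e1 | h1
      · rw [Prod.ext_iff] at e1
        exact absurd (concat_inj
          (show (true :: v1) ++ [true] = [true] ++ [false] from e1.2)).2 (by simp)
      · obtain ⟨q', hq', hq2'⟩ := Finset.mem_image.mp h1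
        rw [Prod.ext_iff] at hq2'
        obtain ⟨hq2a', hq2b'⟩ := hq2'
        rcases cons_eq_concat hq2b' with ⟨hf, -, -⟩ | ⟨w1, hw1, hb1'⟩
        · simp at hf
        have hww : v1 = w1 := by injection hw1
        rw [← hww] at hb1'
        refine hTred u v1 ⟨?_, ?_⟩
        · have hqe : q = (u ++ [false], v1 ++ [false]) := Prod.ext hq2a hb1
          rw [← hqe]; exact hsubT q hq
        · have hqe : q' = (u ++ [true], v1 ++ [true]) := Prod.ext hq2a' hb1'
          rw [← hqe]; exact hsubT q' hq'
  have hRed3 : Reduced (insert ((u₀ ++ [false]) ++ [false], [false])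
      (insert ((u₀ ++ [false]) ++ [true], [true, false])
        (insert (u₀ ++ [true], [true, true, false])
          (T''.image fun p => (p.1, true :: true :: p.2))))) := by
    rintro u v ⟨h0, h1⟩
    rcases Finset.mem_insert.mp h0 with e0 | h0
    · rw [Prod.ext_iff] at e0
      obtain ⟨e0a, e0b⟩ := e0
      obtain ⟨hv, -⟩ := concat_inj (show v ++ [false] = [] ++ [false] by simpa using e0b)
      subst hv
      rcases Finset.mem_insert.mp h1 with e1 | h1
      · rw [Prod.ext_iff] at e1
        exact absurd (concat_inj e1.1).2 (by simp)
      rcases Finset.mem_insert.mp h1 with e1 | h1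
      · rw [Prod.ext_iff] at e1
        simpa using e1.2
      rcases Finset.mem_insert.mp h1 with e1 | h1
      · rw [Prod.ext_iff] at e1
        simpa using e1.2
      · obtain ⟨q, hq, hq2⟩ := Finset.mem_image.mp h1
        obtain ⟨s, hs⟩ := htrue q hq
        rw [Prod.ext_iff, hs] at hq2
        simpa using hq2.2
    rcases Finset.mem_insert.mp h0 with e0 | h0
    · rw [Prod.ext_iff] at e0
      exact absurd (concat_inj e0.1).2 (by simp)
    rcases Finset.mem_insert.mp h0 with e0 | h0
    · rw [Prod.ext_iff] at e0
      exact absurd (concat_inj e0.1).2 (by simp)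
    · obtain ⟨q, hq, hq2⟩ := Finset.mem_image.mp h0
      rw [Prod.ext_iff] at hq2
      obtain ⟨hq2a, hq2b⟩ := hq2
      rcases cons_eq_concat hq2b with ⟨-, hf, -⟩ | ⟨v1, rfl, hb1⟩
      · simp at hf
      rcases cons_eq_concat hb1 with ⟨-, hf, -⟩ | ⟨v2, hv12, hb2⟩
      · simp at hf
      rcases Finset.mem_insert.mp h1 with e1 | h1
      · rw [Prod.ext_iff] at e1
        exact absurd (concat_inj e1.1).2 (by simp)
      rcases Finset.mem_insert.mp h1 with e1 | h1
      · rw [Prod.ext_iff] at e1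
        exact absurd (concat_inj
          (show (true :: v1) ++ [true] = [true] ++ [false] from e1.2)).2 (by simp)
      rcases Finset.mem_insert.mp h1 with e1 | h1
      · rw [Prod.ext_iff] at e1
        exact absurd (concat_inj
          (show (true :: v1) ++ [true] = [true, true] ++ [false] from e1.2)).2 (by simp)
      · obtain ⟨q', hq', hq2'⟩ := Finset.mem_image.mp h1
        rw [Prod.ext_iff] at hq2'
        obtain ⟨hq2a', hq2b'⟩ := hq2'
        rcases cons_eq_concat hq2b' with ⟨hf, -, -⟩ | ⟨w1, hw1, hb1'⟩
        · simp at hf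
        have hww : v1 = w1 := by injection hw1
        rw [← hww, hv12] at hb1'
        rcases cons_eq_concat hb1' with ⟨hf, -, -⟩ | ⟨w2, hw2, hb2'⟩
        · simp at hf
        have hww2 : v2 = w2 := by injection hw2
        rw [← hww2] at hb2'
        refine hTred u v2 ⟨?_, ?_⟩
        · have hqe : q = (u ++ [false], v2 ++ [false]) := Prod.ext hq2a hb2
          rw [← hqe]; exact hsubT q hq
        · have hqe : q' = (u ++ [true], v2 ++ [true]) := Prod.ext hq2a' hb2'
          rw [← hqe]; exact hsubT q' hq'
  have hRed4 : Reduced (insert ((u₀ ++ [false]) ++ [false], [false])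
      (insert ((u₀ ++ [false]) ++ [true], [true, false, false])
        (insert (u₀ ++ [true], [true, false, true])
          (T''.image fun p => (p.1, true :: p.2))))) := by
    rintro u v ⟨h0, h1⟩
    rcases Finset.mem_insert.mp h0 with e0 | h0
    · rw [Prod.ext_iff] at e0
      obtain ⟨e0a, e0b⟩ := e0
      obtain ⟨hv, -⟩ := concat_inj (show v ++ [false] = [] ++ [false] by simpa using e0b)
      subst hv
      rcases Finset.mem_insert.mp h1 with e1 | h1
      · rw [Prod.ext_iff] at e1
        exact absurd (concat_inj e1.1).2 (by simp)
      rcases Finset.mem_insert.mp h1 with e1 | h1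
      · rw [Prod.ext_iff] at e1
        simpa using e1.2
      rcases Finset.mem_insert.mp h1 with e1 | h1
      · rw [Prod.ext_iff] at e1
        simpa using e1.2
      · obtain ⟨q, hq, hq2⟩ := Finset.mem_image.mp h1
        obtain ⟨s, hs⟩ := htrue q hq
        rw [Prod.ext_iff, hs] at hq2
        simpa using hq2.2
    rcases Finset.mem_insert.mp h0 with e0 | h0
    · rw [Prod.ext_iff] at e0
      exact absurd (concat_inj e0.1).2 (by simp)
    rcases Finset.mem_insert.mp h0 with e0 | h0
    · rw [Prod.ext_iff] at e0
      exact absurd (concat_inj e0.1).2 (by simp)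
    · obtain ⟨q, hq, hq2⟩ := Finset.mem_image.mp h0
      rw [Prod.ext_iff] at hq2
      obtain ⟨hq2a, hq2b⟩ := hq2
      rcases cons_eq_concat hq2b with ⟨-, hf, -⟩ | ⟨v1, rfl, hb1⟩
      · simp at hf
      rcases Finset.mem_insert.mp h1 with e1 | h1
      · rw [Prod.ext_iff] at e1
        exact absurd (concat_inj e1.1).2 (by simp)
      rcases Finset.mem_insert.mp h1 with e1 | h1
      · rw [Prod.ext_iff] at e1
        exact absurd (concat_inj
          (show (true :: v1) ++ [true] = [true, false] ++ [false] from e1.2)).2 (by simp)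
      rcases Finset.mem_insert.mp h1 with e1 | h1
      · rw [Prod.ext_iff] at e1
        have hv1 : v1 = [false] := by
          have := (concat_inj
            (show (true :: v1) ++ [true] = [true, false] ++ [true] from e1.2)).1
          simpa using this
        obtain ⟨s, hs⟩ := htrue q hq
        have : true :: s = v1 ++ [false] := by rw [← hs, hb1]
        rw [hv1] at this
        simp at this
      · obtain ⟨q', hq', hq2'⟩ := Finset.mem_image.mp h1
        rw [Prod.ext_iff] at hq2'
        obtain ⟨hq2a', hq2b'⟩ := hq2'
        rcases cons_eq_concat hq2b' with ⟨hf, -, -⟩ | ⟨w1, hw1, hb1'⟩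
        · simp at hf
        have hww : v1 = w1 := by injection hw1
        rw [← hww] at hb1'
        refine hTred u v1 ⟨?_, ?_⟩
        · have hqe : q = (u ++ [false], v1 ++ [false]) := Prod.ext hq2a hb1
          rw [← hqe]; exact hsubT q hq
        · have hqe : q' = (u ++ [true], v1 ++ [true]) := Prod.ext hq2a' hb1'
          rw [← hqe]; exact hsubT q' hq'
  have hRed5 : Reduced (insert ((u₀ ++ [false]) ++ [false], [false, false])
      (insert ((u₀ ++ [false]) ++ [true], [false, true, false])
        (insert (u₀ ++ [true], [false, true, true]) T''))) := by
    rintro u v ⟨h0, h1⟩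
    rcases Finset.mem_insert.mp h0 with e0 | h0
    · rw [Prod.ext_iff] at e0
      obtain ⟨e0a, e0b⟩ := e0
      obtain ⟨hv, -⟩ := concat_inj (show v ++ [false] = [false] ++ [false] from e0b)
      subst hv
      rcases Finset.mem_insert.mp h1 with e1 | h1
      · rw [Prod.ext_iff] at e1
        exact absurd (concat_inj e1.1).2 (by simp)
      rcases Finset.mem_insert.mp h1 with e1 | h1
      · rw [Prod.ext_iff] at e1
        simpa using e1.2
      rcases Finset.mem_insert.mp h1 with e1 | h1
      · rw [Prod.ext_iff] at e1
        simpa using e1.2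
      · obtain ⟨s, hs⟩ := htrue _ h1
        simp at hs
    rcases Finset.mem_insert.mp h0 with e0 | h0
    · rw [Prod.ext_iff] at e0
      exact absurd (concat_inj e0.1).2 (by simp)
    rcases Finset.mem_insert.mp h0 with e0 | h0
    · rw [Prod.ext_iff] at e0
      exact absurd (concat_inj e0.1).2 (by simp)
    · -- 0-side in T''
      have hs0 := htrue _ h0
      rcases Finset.mem_insert.mp h1 with e1 | h1
      · rw [Prod.ext_iff] at e1
        exact absurd (concat_inj e1.1).2 (by simp)
      rcases Finset.mem_insert.mp h1 with e1 | h1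
      · rw [Prod.ext_iff] at e1
        exact absurd (concat_inj
          (show v ++ [true] = [false, true] ++ [false] from e1.2)).2 (by simp)
      rcases Finset.mem_insert.mp h1 with e1 | h1
      · rw [Prod.ext_iff] at e1
        have hv : v = [false, true] := (concat_inj
          (show v ++ [true] = [false, true] ++ [true] from e1.2)).1
        obtain ⟨s, hs⟩ := hs0
        rw [hv] at hs
        simp at hs
      · exact hTred u v ⟨hsubT _ h0, hsubT _ h1⟩
  -- cardinalities
  have hcard1 : (T''.image (fun p => (p.1, true :: p.2))).card = T''.card :=
    Finset.card_image_of_injOn (fun p hp q hq hpq =>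
      hTrep.dom_inj (hsubT p (Finset.mem_coe.mp hp)) (hsubT q (Finset.mem_coe.mp hq))
        ((Prod.ext_iff.mp hpq).1))
  have hcard2 : (T''.image (fun p => (p.1, true :: true :: p.2))).card = T''.card :=
    Finset.card_image_of_injOn (fun p hp q hq hpq =>
      hTrep.dom_inj (hsubT p (Finset.mem_coe.mp hp)) (hsubT q (Finset.mem_coe.mp hq))
        ((Prod.ext_iff.mp hpq).1))
  have hn2b : (u₀ ++ [true], [true, false]) ∉ T''.image (fun p => (p.1, true :: p.2)) := by
    intro h
    obtain ⟨q, hq, hq2⟩ := Finset.mem_image.mp h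
    obtain ⟨s, hs⟩ := htrue q hq
    rw [Prod.ext_iff, hs] at hq2
    simp at hq2
  have hn2a : (u₀ ++ [false], [false]) ∉
      insert (u₀ ++ [true], [true, false]) (T''.image fun p => (p.1, true :: p.2)) := by
    intro h
    rcases Finset.mem_insert.mp h with h | h
    · simp at h
    · obtain ⟨q, hq, hq2⟩ := Finset.mem_image.mp h
      rw [Prod.ext_iff] at hq2
      simp at hq2
  have hcT2 : (insert (u₀ ++ [false], [false]) (insert (u₀ ++ [true], [true, false])
      (T''.image fun p => (p.1, true :: p.2)))).card = T''.card + 2 := by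
    rw [Finset.card_insert_of_notMem hn2a, Finset.card_insert_of_notMem hn2b, hcard1]
  have hn3c : (u₀ ++ [true], [true, true, false]) ∉
      T''.image (fun p => (p.1, true :: true :: p.2)) := by
    intro h
    obtain ⟨q, hq, hq2⟩ := Finset.mem_image.mp h
    obtain ⟨s, hs⟩ := htrue q hq
    rw [Prod.ext_iff, hs] at hq2
    simp at hq2
  have hn3b : ((u₀ ++ [false]) ++ [true], [true, false]) ∉
      insert (u₀ ++ [true], [true, true, false])
        (T''.image fun p => (p.1, true :: true :: p.2)) := by
    intro h
    rcases Finset.mem_insert.mp h with h | h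
    · simp at h
    · obtain ⟨q, hq, hq2⟩ := Finset.mem_image.mp h
      rw [Prod.ext_iff] at hq2
      simp at hq2
  have hn3a : ((u₀ ++ [false]) ++ [false], [false]) ∉
      insert ((u₀ ++ [false]) ++ [true], [true, false])
        (insert (u₀ ++ [true], [true, true, false])
          (T''.image fun p => (p.1, true :: true :: p.2))) := by
    intro h
    rcases Finset.mem_insert.mp h with h | h
    · simp at h
    rcases Finset.mem_insert.mp h with h | h
    · simp at h
    · obtain ⟨q, hq, hq2⟩ := Finset.mem_image.mp h
      rw [Prod.ext_iff] at hq2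
      simp at hq2
  have hcT3 : (insert ((u₀ ++ [false]) ++ [false], [false])
      (insert ((u₀ ++ [false]) ++ [true], [true, false])
        (insert (u₀ ++ [true], [true, true, false])
          (T''.image fun p => (p.1, true :: true :: p.2))))).card = T''.card + 3 := by
    rw [Finset.card_insert_of_notMem hn3a, Finset.card_insert_of_notMem hn3b,
      Finset.card_insert_of_notMem hn3c, hcard2]
  have hn4c : (u₀ ++ [true], [true, false, true]) ∉
      T''.image (fun p => (p.1, true :: p.2)) := by
    intro h
    obtain ⟨q, hq, hq2⟩ := Finset.mem_image.mp h
    obtain ⟨s, hs⟩ := htrue q hq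
    rw [Prod.ext_iff, hs] at hq2
    simp at hq2
  have hn4b : ((u₀ ++ [false]) ++ [true], [true, false, false]) ∉
      insert (u₀ ++ [true], [true, false, true])
        (T''.image fun p => (p.1, true :: p.2)) := by
    intro h
    rcases Finset.mem_insert.mp h with h | h
    · simp at h
    · obtain ⟨q, hq, hq2⟩ := Finset.mem_image.mp h
      obtain ⟨s, hs⟩ := htrue q hq
      rw [Prod.ext_iff, hs] at hq2
      simp at hq2
  have hn4a : ((u₀ ++ [false]) ++ [false], [false]) ∉
      insert ((u₀ ++ [false]) ++ [true], [true, false, false])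
        (insert (u₀ ++ [true], [true, false, true])
          (T''.image fun p => (p.1, true :: p.2))) := by
    intro h
    rcases Finset.mem_insert.mp h with h | h
    · simp at h
    rcases Finset.mem_insert.mp h with h | h
    · simp at h
    · obtain ⟨q, hq, hq2⟩ := Finset.mem_image.mp h
      rw [Prod.ext_iff] at hq2
      simp at hq2
  have hcT4 : (insert ((u₀ ++ [false]) ++ [false], [false])
      (insert ((u₀ ++ [false]) ++ [true], [true, false, false])
        (insert (u₀ ++ [true], [true, false, true])
          (T''.image fun p => (p.1, true :: p.2))))).card = T''.card + 3 := by
    rw [Finset.card_insert_of_notMem hn4a, Finset.card_insert_of_notMem hn4b,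
      Finset.card_insert_of_notMem hn4c, hcard1]
  have hn5c : (u₀ ++ [true], [false, true, true]) ∉ T'' := by
    intro h
    obtain ⟨s, hs⟩ := htrue _ h
    simp at hs
  have hn5b : ((u₀ ++ [false]) ++ [true], [false, true, false]) ∉
      insert (u₀ ++ [true], [false, true, true]) T'' := by
    intro h
    rcases Finset.mem_insert.mp h with h | h
    · simp at h
    · obtain ⟨s, hs⟩ := htrue _ h
      simp at hs
  have hn5a : ((u₀ ++ [false]) ++ [false], [false, false]) ∉
      insert ((u₀ ++ [false]) ++ [true], [false, true, false])
        (insert (u₀ ++ [true], [false, true, true]) T'') := by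
    intro h
    rcases Finset.mem_insert.mp h with h | h
    · simp at h
    rcases Finset.mem_insert.mp h with h | h
    · simp at h
    · obtain ⟨s, hs⟩ := htrue _ h
      simp at hs
  have hcT5 : (insert ((u₀ ++ [false]) ++ [false], [false, false])
      (insert ((u₀ ++ [false]) ++ [true], [false, true, false])
        (insert (u₀ ++ [true], [false, true, true]) T''))).card = T''.card + 3 := by
    rw [Finset.card_insert_of_notMem hn5a, Finset.card_insert_of_notMem hn5b,
      Finset.card_insert_of_notMem hn5c]
  have hcT'' : T''.card + 1 = T.card := Finset.card_erase_add_one hTmem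
  -- Nbr values
  have hNg : Nbr g = T.card := Nbr_eq g T hTrep hTred
  have hN2 : Nbr (g.trans x0) = T''.card + 2 := by
    rw [Nbr_eq _ _ h2 hRed2, hcT2]
  have hN3 : Nbr (g.trans (x0 ^ 2)) = T''.card + 3 := by
    rw [Nbr_eq _ _ h4 hRed3, hcT3]
  have hN4 : Nbr ((g.trans (x0 ^ 2)).trans x1⁻¹) = T''.card + 3 := by
    rw [Nbr_eq _ _ h5 hRed4, hcT4]
  have hN5 : Nbr (((g.trans (x0 ^ 2)).trans x1⁻¹).trans x0⁻¹) = T''.card + 3 := by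
    rw [Nbr_eq _ _ h6 hRed5, hcT5]
  refine ⟨?_, ?_, by omega, by omega, by omega, by omega, by omega⟩
  · rintro ⟨u, T6, h6rep, h6red, h6mem⟩
    rw [reduced_unique h6rep h6red h6 hRed5] at h6mem
    rcases Finset.mem_insert.mp h6mem with e | h6mem
    · simp at e
    rcases Finset.mem_insert.mp h6mem with e | h6mem
    · simp at e
    rcases Finset.mem_insert.mp h6mem with e | h6mem
    · simp at e
    · obtain ⟨s, hs⟩ := htrue _ h6mem
      simp at hs
  · exact ⟨(u₀ ++ [false]) ++ [false], [false, false],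
      ⟨_, h6, hRed5, Finset.mem_insert_self _ _⟩, ⟨[false], rfl⟩, by simp⟩
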